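/- arXiv:1711.00580 — 4 statements merged into one kernel-verified Lean document; each statement's English description precedes it below -/
import Mathlib

section
/- If M = B + f·|w⟩⟨w| is a rank-one perturbation of an N×N real matrix B, where w is a unit vector and f a real number, then the singular values of M and B interlace: λ_{j+1}(B) ≥ μ_j(M) ≥ λ_{j-1}(B) for all valid indices j, where singular values are listed in increasing order. -/
open Matrix

open RealInnerProductSpace


lemma inner_eq_dot {N : ℕ} (x y : EuclideanSpace ℝ (Fin N)) :
    ⟪x, y⟫ = (x : Fin N → ℝ) ⬝ᵥ (y : Fin N → ℝ) := by
  simp [PiLp.inner_apply, dotProduct, RCLike.inner_apply, mul_comm]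

lemma toEuclideanLin_eigen {N : ℕ} {A : Matrix (Fin N) (Fin N) ℝ} (hA : A.IsHermitian) (l : Fin N) :
    Matrix.toEuclideanLin A (hA.eigenvectorBasis l) = hA.eigenvalues l • hA.eigenvectorBasis l := by
  have := hA.mulVec_eigenvectorBasis l
  rw [Matrix.toEuclideanLin_apply]
  apply (WithLp.equiv 2 (Fin N → ℝ)).injective
  simpa using this

lemma repr_mulVec {N : ℕ} {A : Matrix (Fin N) (Fin N) ℝ} (hA : A.IsHermitian)
    (x : EuclideanSpace ℝ (Fin N)) (k : Fin N) :
    hA.eigenvectorBasis.repr (Matrix.toEuclideanLin A x) k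
      = hA.eigenvalues k * hA.eigenvectorBasis.repr x k := by
  set b := hA.eigenvectorBasis with hb
  have hx : x = ∑ l, b.repr x l • b l := (b.sum_repr x).symm
  have h1 : Matrix.toEuclideanLin A x = ∑ l, (hA.eigenvalues l * b.repr x l) • b l := by
    conv_lhs => rw [hx, map_sum]
    refine Finset.sum_congr rfl fun l _ => ?_
    rw [_root_.map_smul, toEuclideanLin_eigen hA l, smul_smul, mul_comm]
  rw [h1]
  rw [map_sum]
  have : ∀ l : Fin N, (b.repr ((hA.eigenvalues l * b.repr x l) • b l)) k
      = if l = k then hA.eigenvalues k * b.repr x k else 0 := by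
    intro l
    rw [_root_.map_smul, b.repr_self]
    simp only [PiLp.smul_apply, EuclideanSpace.single_apply, smul_eq_mul]
    by_cases h : l = k
    · subst h; simp
    · simp [h, Ne.symm h]
  rw [WithLp.ofLp_sum, Finset.sum_apply]
  simp_rw [this]
  simp

lemma quad_form_eq {N : ℕ} {A : Matrix (Fin N) (Fin N) ℝ} (hA : A.IsHermitian)
    (x : EuclideanSpace ℝ (Fin N)) :
    (x : Fin N → ℝ) ⬝ᵥ (A *ᵥ x) = ∑ k, hA.eigenvalues k * (hA.eigenvectorBasis.repr x k)^2 := by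
  set b := hA.eigenvectorBasis with hb
  have h0 : (x : Fin N → ℝ) ⬝ᵥ (A *ᵥ x) = ⟪x, Matrix.toEuclideanLin A x⟫ := by
    rw [inner_eq_dot, Matrix.toEuclideanLin_apply]
  rw [h0, ← b.repr.inner_map_map x (Matrix.toEuclideanLin A x)]
  rw [PiLp.inner_apply]
  refine Finset.sum_congr rfl fun k _ => ?_
  rw [repr_mulVec hA x k, Real.inner_apply]
  show b.repr x k * (hA.eigenvalues k * b.repr x k) = _
  ring

lemma exists_inf_ne_zero {N : ℕ} (S T : Submodule ℝ (EuclideanSpace ℝ (Fin N)))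
    (h : N < Module.finrank ℝ S + Module.finrank ℝ T) :
    ∃ x : EuclideanSpace ℝ (Fin N), x ∈ S ⊓ T ∧ x ≠ 0 := by
  apply Submodule.exists_mem_ne_zero_of_ne_bot
  intro hbot
  have h1 := Submodule.finrank_sup_add_finrank_inf_eq S T
  rw [hbot] at h1
  simp only [finrank_bot, add_zero] at h1
  have h2 : Module.finrank ℝ ↥(S ⊔ T) ≤ N := by
    simpa [finrank_euclideanSpace] using Submodule.finrank_le (S ⊔ T)
  omega

lemma repr_eq_zero_of_mem_span {N : ℕ} (b : OrthonormalBasis (Fin N) ℝ (EuclideanSpace ℝ (Fin N)))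
    (K : Finset (Fin N)) {x : EuclideanSpace ℝ (Fin N)}
    (hx : x ∈ Submodule.span ℝ (b '' ↑K)) {k : Fin N} (hk : k ∉ K) :
    b.repr x k = 0 := by
  induction hx using Submodule.span_induction with
  | mem y hy =>
    obtain ⟨l, hl, rfl⟩ := hy
    rw [b.repr_self]
    simp only [EuclideanSpace.single_apply]
    exact if_neg (by rintro rfl; exact hk hl)
  | zero => simp
  | add y z _ _ hy hz => rw [map_add]; simp [Pi.add_apply]; rw [hy, hz]; ring
  | smul c y _ hy => rw [_root_.map_smul]; simp [hy]

lemma finrank_span_orthonormal {N : ℕ}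
    (b : OrthonormalBasis (Fin N) ℝ (EuclideanSpace ℝ (Fin N))) (K : Finset (Fin N)) :
    Module.finrank ℝ (Submodule.span ℝ (b '' ↑K)) = K.card := by
  have hli : LinearIndependent ℝ (fun k : ↥(↑K : Set (Fin N)) => b k) :=
    (b.orthonormal.linearIndependent).comp _ Subtype.val_injective
  have : b '' ↑K = Set.range (fun k : ↥(↑K : Set (Fin N)) => b k) := by
    ext y; simp [Set.mem_image, Set.mem_range]
  rw [this, finrank_span_eq_card hli]
  simp

lemma filter_card_eq {N : ℕ} (mu g : Fin N → ℝ)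
    (h : Multiset.map mu Finset.univ.val = Multiset.map g Finset.univ.val)
    (p : ℝ → Prop) [DecidablePred p] :
    (Finset.univ.filter (fun k => p (g k))).card = (Finset.univ.filter (fun j => p (mu j))).card := by
  have h1 : ∀ f : Fin N → ℝ, (Finset.univ.filter (fun k => p (f k))).card
      = Multiset.countP p (Multiset.map f Finset.univ.val) := by
    intro f
    rw [Multiset.countP_map]
    rfl
  rw [h1, h1, h]

lemma nonneg_of_multiset_eq {N : ℕ} (mu : Fin N → ℝ) (g : Fin N → ℝ) (hg : ∀ k, 0 ≤ g k)
    (h : Multiset.map mu Finset.univ.val = Multiset.map g Finset.univ.val) (i : Fin N) :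
    0 ≤ mu i := by
  have : mu i ∈ Multiset.map mu Finset.univ.val :=
    Multiset.mem_map_of_mem _ (Finset.mem_univ_val i)
  rw [h] at this
  obtain ⟨k, _, hk⟩ := Multiset.mem_map.mp this
  rw [← hk]; exact hg k

lemma count_ge {N : ℕ} (mu g : Fin N → ℝ) (hmu : Monotone mu)
    (h : Multiset.map mu Finset.univ.val = Multiset.map g Finset.univ.val) (i : Fin N) :
    N - (i : ℕ) ≤ (Finset.univ.filter (fun k => mu i ≤ g k)).card := by
  rw [filter_card_eq mu g h (fun x => mu i ≤ x)]
  calc N - (i : ℕ) = (Finset.Ici i).card := (Fin.card_Ici i).symm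
    _ ≤ _ := Finset.card_le_card (by
        intro j hj
        simp only [Finset.mem_Ici] at hj
        simp only [Finset.mem_filter, Finset.mem_univ, true_and]
        exact hmu hj)

lemma count_le {N : ℕ} (mu g : Fin N → ℝ) (hmu : Monotone mu)
    (h : Multiset.map mu Finset.univ.val = Multiset.map g Finset.univ.val) (i : Fin N) :
    (i : ℕ) + 1 ≤ (Finset.univ.filter (fun k => g k ≤ mu i)).card := by
  rw [filter_card_eq mu g h (fun x => x ≤ mu i)]
  calc (i : ℕ) + 1 = (Finset.Iic i).card := (Fin.card_Iic i).symm
    _ ≤ _ := Finset.card_le_card (by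
        intro j hj
        simp only [Finset.mem_Iic] at hj
        simp only [Finset.mem_filter, Finset.mem_univ, true_and]
        exact hmu hj)

lemma key_lemma {N : ℕ} (B M : Matrix (Fin N) (Fin N) ℝ)
    (w : Fin N → ℝ) (f : ℝ)
    (hM : M = B + f • Matrix.of (fun i j => w i * w j))
    (hB : (Bᵀ * B).IsHermitian) (hMh : (Mᵀ * M).IsHermitian)
    (lam mu : Fin N → ℝ) (hlam : Monotone lam) (hmu : Monotone mu)
    (hlamvals : Multiset.map lam Finset.univ.val
      = Multiset.map (fun i => Real.sqrt (hB.eigenvalues i)) Finset.univ.val)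
    (hmuvals : Multiset.map mu Finset.univ.val
      = Multiset.map (fun i => Real.sqrt (hMh.eigenvalues i)) Finset.univ.val)
    (i j : Fin N) (hij : (j : ℕ) = (i : ℕ) + 1) :
    mu i ≤ lam j := by
  classical
  -- nonnegativity of eigenvalues
  have hBT : Bᵀ * B = Bᴴ * B := by congr 1
  have hMT : Mᵀ * M = Mᴴ * M := by congr 1
  have hBpsd : (Bᵀ * B).PosSemidef := hBT ▸ Matrix.posSemidef_conjTranspose_mul_self B
  have hMpsd : (Mᵀ * M).PosSemidef := hMT ▸ Matrix.posSemidef_conjTranspose_mul_self M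
  have hBev : ∀ k, 0 ≤ hB.eigenvalues k := fun k => hBpsd.eigenvalues_nonneg k
  have hMev : ∀ k, 0 ≤ hMh.eigenvalues k := fun k => hMpsd.eigenvalues_nonneg k
  set gB : Fin N → ℝ := fun k => Real.sqrt (hB.eigenvalues k) with hgB
  set gM : Fin N → ℝ := fun k => Real.sqrt (hMh.eigenvalues k) with hgM
  have hlamj : 0 ≤ lam j := nonneg_of_multiset_eq lam gB (fun k => Real.sqrt_nonneg _) hlamvals j
  have hmui0 : 0 ≤ mu i := nonneg_of_multiset_eq mu gM (fun k => Real.sqrt_nonneg _) hmuvals i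
  set u := hB.eigenvectorBasis with hu
  set v := hMh.eigenvectorBasis with hv
  set KB : Finset (Fin N) := Finset.univ.filter (fun k => gB k ≤ lam j) with hKB
  set KM : Finset (Fin N) := Finset.univ.filter (fun k => mu i ≤ gM k) with hKM
  have hKBcard : (i : ℕ) + 2 ≤ KB.card := by
    have h := count_le lam gB hlam hlamvals j
    calc (i : ℕ) + 2 = (j : ℕ) + 1 := by omega
      _ ≤ KB.card := h
  have hKMcard : N - (i : ℕ) ≤ KM.card := count_ge mu gM hmu hmuvals i
  -- subspaces
  set S0 : Submodule ℝ (EuclideanSpace ℝ (Fin N)) := Submodule.span ℝ (u '' ↑KB) with hS0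
  set T : Submodule ℝ (EuclideanSpace ℝ (Fin N)) := Submodule.span ℝ (v '' ↑KM) with hT
  set W : EuclideanSpace ℝ (Fin N) := (WithLp.equiv 2 (Fin N → ℝ)).symm w with hW
  set φ : EuclideanSpace ℝ (Fin N) →ₗ[ℝ] ℝ := (innerSL ℝ W).toLinearMap with hφ
  have hkerφ : N - 1 ≤ Module.finrank ℝ (LinearMap.ker φ) := by
    have h1 := LinearMap.finrank_range_add_finrank_ker φ
    have h2 : Module.finrank ℝ (LinearMap.range φ) ≤ 1 := by
      simpa using Submodule.finrank_le (LinearMap.range φ)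
    have h3 : Module.finrank ℝ (EuclideanSpace ℝ (Fin N)) = N := finrank_euclideanSpace_fin
    omega
  set S : Submodule ℝ (EuclideanSpace ℝ (Fin N)) := S0 ⊓ LinearMap.ker φ with hS
  have hScard : (i : ℕ) + 1 ≤ Module.finrank ℝ S := by
    have h1 := Submodule.finrank_sup_add_finrank_inf_eq S0 (LinearMap.ker φ)
    have h2 : Module.finrank ℝ ↥(S0 ⊔ LinearMap.ker φ) ≤ N := by
      have := Submodule.finrank_le (S0 ⊔ LinearMap.ker φ)
      simpa [finrank_euclideanSpace_fin] using this
    have h3 : Module.finrank ℝ S0 = KB.card := finrank_span_orthonormal u KB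
    have hN : (i : ℕ) + 1 < N := by have := j.isLt; omega
    rw [hS]
    omega
  have hTcard : Module.finrank ℝ T = KM.card := finrank_span_orthonormal v KM
  -- find nonzero vector
  obtain ⟨x, hxST, hx0⟩ := exists_inf_ne_zero S T (by
    have hiN : (i : ℕ) < N := i.isLt
    omega)
  obtain ⟨⟨hxS0, hxker⟩, hxT⟩ := hxST
  -- x is orthogonal to w
  have hwx : w ⬝ᵥ (x : Fin N → ℝ) = 0 := by
    have h0 : φ x = 0 := LinearMap.mem_ker.mp hxker
    calc w ⬝ᵥ (x : Fin N → ℝ) = ⟪W, x⟫ := (inner_eq_dot W x).symm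
      _ = 0 := h0
  have hMx : M *ᵥ (x : Fin N → ℝ) = B *ᵥ (x : Fin N → ℝ) := by
    rw [hM, Matrix.add_mulVec, Matrix.smul_mulVec]
    have h1 : (Matrix.of fun a b => w a * w b) *ᵥ (x : Fin N → ℝ) = 0 := by
      funext l
      simp only [Matrix.mulVec, Matrix.of_apply, dotProduct, Pi.zero_apply]
      calc ∑ m, w l * w m * x m = w l * ∑ m, w m * x m := by
            rw [Finset.mul_sum]; exact Finset.sum_congr rfl fun m _ => by ring
        _ = 0 := by rw [show ∑ m, w m * x m = w ⬝ᵥ (x : Fin N → ℝ) from rfl, hwx, mul_zero]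
    rw [h1, smul_zero, add_zero]
  have hPdot : ∀ (P : Matrix (Fin N) (Fin N) ℝ) (y : Fin N → ℝ),
      y ⬝ᵥ ((Pᵀ * P) *ᵥ y) = (P *ᵥ y) ⬝ᵥ (P *ᵥ y) := by
    intro P y
    rw [← Matrix.mulVec_mulVec, Matrix.dotProduct_mulVec, Matrix.vecMul_transpose]
  have hdot : (x : Fin N → ℝ) ⬝ᵥ ((Mᵀ * M) *ᵥ x) = (x : Fin N → ℝ) ⬝ᵥ ((Bᵀ * B) *ᵥ x) := by
    rw [hPdot M x, hPdot B x, hMx]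
  have hsum_u : ∑ k, (u.repr x k)^2 = ⟪x, x⟫ := by
    rw [← u.repr.inner_map_map x x, PiLp.inner_apply]
    refine Finset.sum_congr rfl fun k _ => ?_
    show (u.repr x k)^2 = u.repr x k * u.repr x k
    ring
  have hsum_v : ∑ k, (v.repr x k)^2 = ⟪x, x⟫ := by
    rw [← v.repr.inner_map_map x x, PiLp.inner_apply]
    refine Finset.sum_congr rfl fun k _ => ?_
    show (v.repr x k)^2 = v.repr x k * v.repr x k
    ring
  have hpos : 0 < ⟪x, x⟫ := by
    rw [real_inner_self_eq_norm_sq]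
    have : 0 < ‖x‖ := norm_pos_iff.mpr hx0
    positivity
  have hlow : (mu i)^2 * ⟪x, x⟫ ≤ (x : Fin N → ℝ) ⬝ᵥ ((Mᵀ * M) *ᵥ x) := by
    rw [quad_form_eq hMh x, ← hsum_v, Finset.mul_sum]
    refine Finset.sum_le_sum fun k _ => ?_
    by_cases hk : k ∈ KM
    · have h1 : mu i ≤ gM k := (Finset.mem_filter.mp hk).2
      have h2 : (mu i)^2 ≤ hMh.eigenvalues k := by
        have h3 : (mu i)^2 ≤ (gM k)^2 := pow_le_pow_left₀ hmui0 h1 2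
        rwa [hgM, Real.sq_sqrt (hMev k)] at h3
      exact mul_le_mul_of_nonneg_right h2 (sq_nonneg _)
    · have h4 : v.repr x k = 0 := repr_eq_zero_of_mem_span v KM hxT hk
      rw [h4]; simp
  have hup : (x : Fin N → ℝ) ⬝ᵥ ((Bᵀ * B) *ᵥ x) ≤ (lam j)^2 * ⟪x, x⟫ := by
    rw [quad_form_eq hB x, ← hsum_u, Finset.mul_sum]
    refine Finset.sum_le_sum fun k _ => ?_
    by_cases hk : k ∈ KB
    · have h1 : gB k ≤ lam j := (Finset.mem_filter.mp hk).2
      have h2 : hB.eigenvalues k ≤ (lam j)^2 := by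
        have h3 : (gB k)^2 ≤ (lam j)^2 := pow_le_pow_left₀ (Real.sqrt_nonneg _) h1 2
        rwa [hgB, Real.sq_sqrt (hBev k)] at h3
      exact mul_le_mul_of_nonneg_right h2 (sq_nonneg _)
    · have h4 : u.repr x k = 0 := repr_eq_zero_of_mem_span u KB hxS0 hk
      rw [h4]; simp
  have hsq : (mu i)^2 ≤ (lam j)^2 := by
    have h := hlow.trans (hdot.le.trans hup)
    exact le_of_mul_le_mul_right h hpos
  calc mu i = Real.sqrt ((mu i)^2) := (Real.sqrt_sq hmui0).symm
    _ ≤ Real.sqrt ((lam j)^2) := Real.sqrt_le_sqrt hsq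
    _ = lam j := Real.sqrt_sq hlamj

theorem singular_value_interlacing {N : ℕ} (B : Matrix (Fin N) (Fin N) ℝ)
    (w : Fin N → ℝ) (hw : ∑ i, w i ^ 2 = 1) (f : ℝ)
    (M : Matrix (Fin N) (Fin N) ℝ)
    (hM : M = B + f • Matrix.of (fun i j => w i * w j))
    (hB : (Bᵀ * B).IsHermitian) (hMh : (Mᵀ * M).IsHermitian)
    (lam mu : Fin N → ℝ) (hlam : Monotone lam) (hmu : Monotone mu)
    (hlamvals : Multiset.map lam Finset.univ.val
      = Multiset.map (fun i => Real.sqrt (hB.eigenvalues i)) Finset.univ.val)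
    (hmuvals : Multiset.map mu Finset.univ.val
      = Multiset.map (fun i => Real.sqrt (hMh.eigenvalues i)) Finset.univ.val) :
    ∀ i j : Fin N, (j : ℕ) = (i : ℕ) + 1 → lam j ≥ mu i ∧ mu j ≥ lam i := by 
  intro i j hij
  have hM' : B = M + (-f) • Matrix.of (fun i j => w i * w j) := by
    rw [hM, neg_smul, add_assoc, add_neg_cancel, add_zero]
  exact ⟨key_lemma B M w f hM hB hMh lam mu hlam hmu hlamvals hmuvals i j hij,
    key_lemma M B w (-f) hM' hMh hB mu lam hmu hlam hmuvals hlamvals i j hij⟩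
end

section
/- Let x_1, ..., x_N be distinct real numbers with x_i ≠ -x_k for i ≠ k, and define u_{i,1} = Σ_{k≠i} 1/(x_i - x_k), u_{i,2} = Σ_{k≠i} 1/(x_i - x_k)², ū_{i,1} = Σ_{k≠i} 1/(x_i + x_k), ū_{i,2} = Σ_{k≠i} 1/(x_i + x_k)². Then Σ_i [(u_{i,1} + ū_{i,1})² - u_{i,2} - ū_{i,2}] = 0. -/
open Finset

lemma sum_erase_ite {α M : Type*} [DecidableEq α] [AddCommMonoid M]
    (s : Finset α) (a : α) (f : α → M) :
    ∑ x ∈ s.erase a, f x = ∑ x ∈ s, if x = a then 0 else f x := by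
  rw [← Finset.sum_erase s (by simp : (if a = a then (0:M) else f a) = 0)]
  exact Finset.sum_congr rfl fun x hx => by rw [if_neg (Finset.ne_of_mem_erase hx)]

lemma pair_zero {N : ℕ} (f : Fin N → Fin N → ℝ)
    (hf : ∀ i k, i ≠ k → f i k = -f k i) :
    ∑ i, ∑ k ∈ Finset.univ.erase i, f i k = 0 := by
  have hswap : ∑ i, ∑ k ∈ Finset.univ.erase i, f i k
      = ∑ k, ∑ i ∈ Finset.univ.erase k, f i k := by
    apply Finset.sum_comm'
    intro i k
    simp only [Finset.mem_univ, Finset.mem_erase, true_and, and_true]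
    tauto
  have hneg : ∑ k, ∑ i ∈ Finset.univ.erase k, f i k
      = -∑ i, ∑ k ∈ Finset.univ.erase i, f i k := by
    rw [← Finset.sum_neg_distrib]
    apply Finset.sum_congr rfl
    intro k _
    rw [← Finset.sum_neg_distrib]
    apply Finset.sum_congr rfl
    intro i hi
    exact hf i k (Finset.ne_of_mem_erase hi)
  linarith [hswap.trans hneg]

lemma triple_zero {N : ℕ} (g : Fin N → Fin N → Fin N → ℝ)
    (hg : ∀ i k l, i ≠ k → i ≠ l → k ≠ l → g i k l + g k l i + g l i k = 0) :
    ∑ i, ∑ k ∈ Finset.univ.erase i, ∑ l ∈ (Finset.univ.erase i).erase k, g i k l = 0 := by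
  set T : Finset (Fin N × Fin N × Fin N) :=
    Finset.univ.filter (fun p => p.1 ≠ p.2.1 ∧ p.1 ≠ p.2.2 ∧ p.2.1 ≠ p.2.2) with hT
  have key : ∀ h : Fin N → Fin N → Fin N → ℝ,
      ∑ i, ∑ k ∈ Finset.univ.erase i, ∑ l ∈ (Finset.univ.erase i).erase k, h i k l
      = ∑ p ∈ T, h p.1 p.2.1 p.2.2 := by
    intro h
    rw [hT, Finset.sum_filter, Fintype.sum_prod_type]
    simp only [Fintype.sum_prod_type]
    apply Finset.sum_congr rfl; intro i _
    rw [sum_erase_ite]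
    apply Finset.sum_congr rfl; intro k _
    by_cases hk : k = i
    · simp [hk]
    · rw [if_neg hk, sum_erase_ite, sum_erase_ite]
      apply Finset.sum_congr rfl; intro l _
      by_cases h2 : l = i
      · simp [h2, hk]
      · by_cases h1 : l = k
        · simp [h1, h2]
        · have hpos : (¬i = k ∧ ¬i = l ∧ ¬k = l) :=
            ⟨fun e => hk e.symm, fun e => h2 e.symm, fun e => h1 e.symm⟩
          simp [h1, h2, hpos]
  have cyc : ∀ h : Fin N → Fin N → Fin N → ℝ,
      ∑ p ∈ T, h p.1 p.2.1 p.2.2 = ∑ p ∈ T, h p.2.1 p.2.2 p.1 := by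
    intro h
    apply Finset.sum_nbij' (fun p => (p.2.2, p.1, p.2.1)) (fun p => (p.2.1, p.2.2, p.1))
    · intro p hp; simp [hT, Finset.mem_filter] at hp ⊢; tauto
    · intro p hp; simp [hT, Finset.mem_filter] at hp ⊢; tauto
    · intro p _; rfl
    · intro p _; rfl
    · intro p _; rfl
  have h1 := key g
  have h2 := (key g).trans (cyc g)
  have h3 := (key g).trans ((cyc g).trans (cyc (fun i k l => g k l i)))
  have hsum3 : (3:ℝ) * (∑ i, ∑ k ∈ Finset.univ.erase i, ∑ l ∈ (Finset.univ.erase i).erase k, g i k l)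
      = ∑ p ∈ T, (g p.1 p.2.1 p.2.2 + g p.2.1 p.2.2 p.1 + g p.2.2 p.1 p.2.1) := by
    rw [Finset.sum_add_distrib, Finset.sum_add_distrib, ← h1, ← h2, ← h3]; ring
  have hz : ∑ p ∈ T, (g p.1 p.2.1 p.2.2 + g p.2.1 p.2.2 p.1 + g p.2.2 p.1 p.2.1) = 0 := by
    apply Finset.sum_eq_zero
    intro p hp
    simp [hT, Finset.mem_filter] at hp
    exact hg p.1 p.2.1 p.2.2 hp.1 hp.2.1 hp.2.2
  have := hsum3.trans hz
  linarith

theorem sum_u_square_identity {N : ℕ} (x : Fin N → ℝ)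
    (hinj : Function.Injective x)
    (hsum : ∀ i k, i ≠ k → x i + x k ≠ 0) :
    ∑ i, (((∑ k ∈ Finset.univ.erase i, 1 / (x i - x k))
        + ∑ k ∈ Finset.univ.erase i, 1 / (x i + x k)) ^ 2
      - (∑ k ∈ Finset.univ.erase i, 1 / (x i - x k) ^ 2)
      - ∑ k ∈ Finset.univ.erase i, 1 / (x i + x k) ^ 2) = 0 := by
  have hd : ∀ i k : Fin N, i ≠ k → x i - x k ≠ 0 := fun i k h => sub_ne_zero.mpr (fun e => h (hinj e))
  have hz : ∀ i k : Fin N, i ≠ k → x i ^ 2 - x k ^ 2 ≠ 0 := by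
    intro i k h
    have : x i ^ 2 - x k ^ 2 = (x i - x k) * (x i + x k) := by ring
    rw [this]
    exact mul_ne_zero (hd i k h) (hsum i k h)
  set c : Fin N → Fin N → ℝ := fun i k => 2 * x i / (x i ^ 2 - x k ^ 2) with hc
  set d : Fin N → Fin N → ℝ := fun i k => 2 * (x i ^ 2 + x k ^ 2) / (x i ^ 2 - x k ^ 2) ^ 2 with hdd
  have step : ∀ i : Fin N,
      (((∑ k ∈ Finset.univ.erase i, 1 / (x i - x k))
        + ∑ k ∈ Finset.univ.erase i, 1 / (x i + x k)) ^ 2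
      - (∑ k ∈ Finset.univ.erase i, 1 / (x i - x k) ^ 2)
      - ∑ k ∈ Finset.univ.erase i, 1 / (x i + x k) ^ 2)
      = (∑ k ∈ Finset.univ.erase i, (c i k ^ 2 - d i k))
        + ∑ k ∈ Finset.univ.erase i, ∑ l ∈ (Finset.univ.erase i).erase k, c i k * c i l := by
    intro i
    have hAB : (∑ k ∈ Finset.univ.erase i, 1 / (x i - x k))
        + ∑ k ∈ Finset.univ.erase i, 1 / (x i + x k)
        = ∑ k ∈ Finset.univ.erase i, c i k := by
      rw [← Finset.sum_add_distrib]
      apply Finset.sum_congr rfl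
      intro k hk
      have hik : i ≠ k := (Finset.ne_of_mem_erase hk).symm
      have h1 := hd i k hik
      have h2 := hsum i k hik
      have h3 := hz i k hik
      rw [hc]
      field_simp
      ring
    have hD : (∑ k ∈ Finset.univ.erase i, 1 / (x i - x k) ^ 2)
        + ∑ k ∈ Finset.univ.erase i, 1 / (x i + x k) ^ 2
        = ∑ k ∈ Finset.univ.erase i, d i k := by
      rw [← Finset.sum_add_distrib]
      apply Finset.sum_congr rfl
      intro k hk
      have hik : i ≠ k := (Finset.ne_of_mem_erase hk).symm
      have h1 := hd i k hik
      have h2 := hsum i k hik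
      have h3 := hz i k hik
      rw [hdd]
      field_simp
      ring
    have hsq : (∑ k ∈ Finset.univ.erase i, c i k) ^ 2
        = ∑ k ∈ Finset.univ.erase i, ∑ l ∈ Finset.univ.erase i, c i k * c i l := by
      rw [sq, Finset.sum_mul_sum]
    have hsplit : ∀ k ∈ Finset.univ.erase i,
        ∑ l ∈ Finset.univ.erase i, c i k * c i l
        = c i k ^ 2 + ∑ l ∈ (Finset.univ.erase i).erase k, c i k * c i l := by
      intro k hk
      rw [← Finset.add_sum_erase _ _ hk, sq]
    rw [hAB, sub_sub, hD, hsq, Finset.sum_congr rfl hsplit, Finset.sum_add_distrib,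
      Finset.sum_sub_distrib]
    ring
  rw [Finset.sum_congr rfl (fun i _ => step i), Finset.sum_add_distrib]
  have part1 : ∑ i, ∑ k ∈ Finset.univ.erase i, (c i k ^ 2 - d i k) = 0 := by
    apply pair_zero
    intro i k hik
    rw [hc, hdd]
    have h1 := hz i k hik
    have h2 := hz k i hik.symm
    field_simp
    ring
  have part2 : ∑ i, ∑ k ∈ Finset.univ.erase i, ∑ l ∈ (Finset.univ.erase i).erase k,
      c i k * c i l = 0 := by
    apply triple_zero
    intro i k l hik hil hkl
    rw [hc]
    have h1 := hz i k hik
    have h2 := hz i l hil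
    have h3 := hz k l hkl
    have h4 := hz k i hik.symm
    have h5 := hz l i hil.symm
    have h6 := hz l k hkl.symm
    field_simp
    ring
  rw [part1, part2, add_zero]
end

section
/- Let B_{ij} ≥ 0 for all i,j in a finite index set, and let u : [0,T] → ℝ^n be differentiable satisfying u_i'(t) = Σ_j B_{ij}(u_j(t) - u_i(t)) for all i and t. Then max_i u_i(t) is nonincreasing in t, and hence ‖u(t)‖_∞ ≤ ‖u(0)‖_∞ for all t ∈ [0,T]. -/
open Set Filter Topology

private lemma ciSup_eq_of_max {n : ℕ} [Nonempty (Fin n)] (v : Fin n → ℝ) {i : Fin n}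
    (hi : ∀ j, v j ≤ v i) : (⨆ j, v j) = v i :=
  le_antisymm (ciSup_le hi) (le_ciSup (Set.finite_range v).bddAbove i)

private lemma max_nonincr {n : ℕ} (hn : 0 < n) (T : ℝ)
    (B : Fin n → Fin n → ℝ) (hB : ∀ i j, 0 ≤ B i j)
    (u : ℝ → Fin n → ℝ)
    (hu : ∀ i, ∀ t ∈ Set.Icc (0 : ℝ) T,
      HasDerivAt (fun s => u s i) (∑ j, B i j * (u t j - u t i)) t) :
    ∀ s t : ℝ, 0 ≤ s → s ≤ t → t ≤ T → (⨆ i, u t i) ≤ ⨆ i, u s i := by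
  have : Nonempty (Fin n) := ⟨⟨0, hn⟩⟩
  intro s t hs hst htT
  set f : ℝ → ℝ := fun x => ⨆ i, u x i with hf
  have hsub : Set.Icc s t ⊆ Set.Icc 0 T := Set.Icc_subset_Icc hs htT
  have hconti : ∀ i, ∀ x ∈ Set.Icc s t, ContinuousWithinAt (fun y => u y i) (Set.Icc s t) x :=
    fun i x hx => ((hu i x (hsub hx)).continuousAt).continuousWithinAt
  have hcont : ContinuousOn f (Set.Icc s t) := by
    intro x hx
    have h : ContinuousAt (fun a => Finset.univ.sup' Finset.univ_nonempty (fun i => u a i)) x :=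
      ContinuousAt.finset_sup'_apply Finset.univ_nonempty
        (fun i _ => (hu i x (hsub hx)).continuousAt)
    have he : (fun a => Finset.univ.sup' Finset.univ_nonempty (fun i => u a i)) = f := by
      funext a; exact Finset.sup'_univ_eq_ciSup _
    rw [he] at h
    exact h.continuousWithinAt
  have key : ∀ ⦃x⦄, x ∈ Set.Icc s t → f x ≤ (fun _ : ℝ => f s) x := by
    apply image_le_of_liminf_slope_right_le_deriv_boundary (B := fun _ => f s)
      (B' := fun _ => 0) hcont le_rfl continuousOn_const
      (fun x _ => hasDerivWithinAt_const x _ _)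
    intro x hx r hr
    -- x ∈ Ico s t, r > 0; show frequently slope f x z < r
    have hxIcc : x ∈ Set.Icc 0 T := hsub ⟨hx.1, hx.2.le⟩
    have hev : ∀ i, ∀ᶠ z in 𝓝[>] x, u z i < f x + r * (z - x) := by
      intro i
      rcases lt_or_eq_of_le (le_ciSup (Set.finite_range (u x)).bddAbove i : u x i ≤ f x) with
        hlt | heq
      · -- continuity case
        have hc : ContinuousAt (fun y => u y i) x := (hu i x hxIcc).continuousAt
        have h1 : ∀ᶠ z in 𝓝[>] x, u z i < f x :=
          (hc.eventually_lt continuousAt_const hlt).filter_mono nhdsWithin_le_nhds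
        have h2 : ∀ᶠ z in 𝓝[>] x, x < z := eventually_mem_nhdsWithin
        filter_upwards [h1, h2] with z h1 h2
        have : 0 ≤ r * (z - x) := mul_nonneg hr.le (by linarith)
        linarith
      · -- argmax case: derivative is nonpositive
        have hmax : ∀ j, u x j ≤ u x i := by
          intro j
          rw [heq]
          exact le_ciSup (Set.finite_range (u x)).bddAbove j
        have hder : (∑ j, B i j * (u x j - u x i)) ≤ 0 := by
          apply Finset.sum_nonpos
          intro j _
          exact mul_nonpos_of_nonneg_of_nonpos (hB i j) (by linarith [hmax j])
        have htendsto : Tendsto (slope (fun y => u y i) x) (𝓝[>] x)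
            (𝓝 (∑ j, B i j * (u x j - u x i))) :=
          ((hasDerivAt_iff_tendsto_slope).1 (hu i x hxIcc)).mono_left
            (nhdsWithin_mono x fun z hz => ne_of_gt hz)
        have h1 : ∀ᶠ z in 𝓝[>] x, slope (fun y => u y i) x z < r :=
          htendsto.eventually_lt_const (lt_of_le_of_lt hder hr)
        have h2 : ∀ᶠ z in 𝓝[>] x, x < z := eventually_mem_nhdsWithin
        filter_upwards [h1, h2] with z h1 h2
        rw [slope_def_field, div_lt_iff₀ (by linarith)] at h1
        have : u x i = f x := heq
        linarith
    have hall : ∀ᶠ z in 𝓝[>] x, slope f x z < r := by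
      have h2 : ∀ᶠ z in 𝓝[>] x, x < z := eventually_mem_nhdsWithin
      filter_upwards [eventually_all.2 hev, h2] with z hz hxz
      obtain ⟨j, hj⟩ := Finite.exists_max (u z)
      have hfz : f z = u z j := ciSup_eq_of_max (u z) hj
      rw [slope_def_field, div_lt_iff₀ (by linarith)]
      have := hz j
      rw [hfz]; linarith
    exact hall.frequently
  exact key ⟨hst, le_rfl⟩

theorem maximum_principle {n : ℕ} (hn : 0 < n) (T : ℝ) (hT : 0 ≤ T)
    (B : Fin n → Fin n → ℝ) (hB : ∀ i j, 0 ≤ B i j)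
    (u : ℝ → Fin n → ℝ)
    (hu : ∀ i, ∀ t ∈ Set.Icc (0 : ℝ) T,
      HasDerivAt (fun s => u s i) (∑ j, B i j * (u t j - u t i)) t) :
    (∀ s t : ℝ, 0 ≤ s → s ≤ t → t ≤ T → (⨆ i, u t i) ≤ ⨆ i, u s i)
    ∧ (∀ t : ℝ, 0 ≤ t → t ≤ T → (⨆ i, |u t i|) ≤ ⨆ i, |u 0 i|) := by
  have : Nonempty (Fin n) := ⟨⟨0, hn⟩⟩
  have h1 := max_nonincr hn T B hB u hu
  have hu' : ∀ i, ∀ t ∈ Set.Icc (0 : ℝ) T,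
      HasDerivAt (fun s => -u s i) (∑ j, B i j * (-u t j - -u t i)) t := by
    intro i t ht
    have : HasDerivAt (fun s => -u s i) (-∑ j, B i j * (u t j - u t i)) t := (hu i t ht).neg
    convert this using 1
    rw [← Finset.sum_neg_distrib]
    apply Finset.sum_congr rfl
    intro j _
    ring
  have h2 := max_nonincr hn T B hB (fun t i => -u t i) hu'
  refine ⟨h1, fun t ht htT => ?_⟩
  apply ciSup_le
  intro i
  have hb0 : BddAbove (Set.range fun i => |u 0 i|) := (Set.finite_range _).bddAbove
  have hle1 : (⨆ i, u 0 i) ≤ ⨆ i, |u 0 i| :=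
    ciSup_le fun j => le_trans (le_abs_self _) (le_ciSup hb0 j)
  have hle2 : (⨆ i, -u 0 i) ≤ ⨆ i, |u 0 i| :=
    ciSup_le fun j => le_trans (neg_le_abs _) (le_ciSup hb0 j)
  rcases abs_cases (u t i) with ⟨h, _⟩ | ⟨h, _⟩
  · rw [h]
    calc u t i ≤ ⨆ j, u t j := le_ciSup (Set.finite_range _).bddAbove i
      _ ≤ ⨆ j, u 0 j := h1 0 t le_rfl ht htT
      _ ≤ _ := hle1
  · rw [h]
    calc -u t i ≤ ⨆ j, -u t j := le_ciSup (f := fun j => -u t j) (Set.finite_range _).bddAbove i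
      _ ≤ ⨆ j, -u 0 j := h2 0 t le_rfl ht htT
      _ ≤ _ := hle2
end

section
/- Let E > 0, η > 0, and set d₁(x) = |E - x| + η, d₂(x) = |-E - x| + η. Then for all real x, |χ_E(x) - (χ_E ⋆ θ_η)(x)| ≤ C η (2E/(d₁(x)d₂(x)) + χ_E(x)/(d₁(x)+d₂(x))) for some absolute constant C, where χ_E = 1_{(-E,E)} and θ_η(u) = η/(π(u²+η²)). -/
open Real

-- arctan is 1-Lipschitz on ordered pairs
lemma my_arctan_sub_le {a b : ℝ} (h : b ≤ a) : arctan a - arctan b ≤ a - b := by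
  have hl : LipschitzWith 1 arctan := by
    apply lipschitzWith_of_nnnorm_deriv_le differentiable_arctan
    intro x
    rw [Real.deriv_arctan]
    rw [← NNReal.coe_le_coe]
    push_cast
    rw [Real.norm_eq_abs, abs_of_pos (by positivity : (0:ℝ) < 1 / (1 + x ^ 2))]
    rw [div_le_one (by positivity)]
    nlinarith [sq_nonneg x]
  have := hl.dist_le_mul a b
  rw [Real.dist_eq, Real.dist_eq] at this
  have h2 : arctan a - arctan b ≤ |arctan a - arctan b| := le_abs_self _
  simp only [NNReal.coe_one, one_mul] at this
  calc arctan a - arctan b ≤ |arctan a - arctan b| := h2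
    _ ≤ |a - b| := this
    _ = a - b := abs_of_nonneg (by linarith)

lemma my_arctan_nonneg {a : ℝ} (h : 0 ≤ a) : 0 ≤ arctan a := by
  rw [← Real.arctan_zero]
  exact Real.arctan_strictMono.monotone h

lemma my_arctan_le_self {a : ℝ} (h : 0 ≤ a) : arctan a ≤ a := by
  have := my_arctan_sub_le h
  simpa using this

lemma my_half_pi_sub {η p : ℝ} (hη : 0 < η) (hp : 0 < p) :
    π / 2 - arctan (p / η) = arctan (η / p) := by
  rw [← inv_div p η, Real.arctan_inv_of_pos (by positivity)]

-- outside bound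
lemma my_out {η u v : ℝ} (hη : 0 < η) (hu : 0 ≤ u) (huv : u ≤ v) :
    arctan (v / η) - arctan (u / η) ≤ π * (4 * η * (v - u) / ((u + η) * (v + η))) := by
  have hd1 : 0 < u + η := by linarith
  have hd2 : 0 < v + η := by linarith
  have hpi : (3:ℝ) < π := Real.pi_gt_three
  have hs : (0:ℝ) ≤ v - u := by linarith
  rw [mul_div_assoc']
  rcases le_or_gt η u with h | h
  · -- η ≤ u : rewrite via inverses
    have hu' : 0 < u := lt_of_lt_of_le hη h
    have hv' : 0 < v := lt_of_lt_of_le hu' huv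
    have e1 := my_half_pi_sub hη hu'
    have e2 := my_half_pi_sub hη hv'
    have key : arctan (v / η) - arctan (u / η) = arctan (η / u) - arctan (η / v) := by
      linarith
    rw [key]
    have hle : η / v ≤ η / u := by gcongr
    have h1 : arctan (η / u) - arctan (η / v) ≤ η / u - η / v := my_arctan_sub_le hle
    have h2 : η / u - η / v = η * (v - u) / (u * v) := by field_simp
    rw [h2] at h1
    refine h1.trans ?_
    rw [div_le_div_iff₀ (by positivity) (by positivity)]
    have h4 : (u + η) * (v + η) ≤ 4 * (u * v) := by nlinarith
    have h5 := mul_le_mul_of_nonneg_left h4 (mul_nonneg hη.le hs)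
    nlinarith [mul_nonneg (mul_nonneg (mul_nonneg hη.le hs) hu'.le) hv'.le]
  · rcases le_or_gt (2*η) v with h2 | h2
    · -- u < η ≤ v/2 : use trivial bound π/2
      have hb : arctan (v / η) - arctan (u / η) ≤ π / 2 := by
        have := Real.arctan_lt_pi_div_two (v / η)
        have := my_arctan_nonneg (by positivity : (0:ℝ) ≤ u / η)
        linarith
      refine hb.trans ?_
      rw [le_div_iff₀ (by positivity)]
      have hY : (u + η) * (v + η) ≤ 8 * (η * (v - u)) := by
        nlinarith [mul_nonneg (by linarith : (0:ℝ) ≤ v - 2*η) (by linarith : (0:ℝ) ≤ η - u),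
          mul_nonneg hη.le (by linarith : (0:ℝ) ≤ η - u),
          mul_nonneg hη.le (by linarith : (0:ℝ) ≤ v - 2*η)]
      nlinarith [Real.pi_pos, mul_nonneg hη.le hs]
    · -- v < 2η : use Lipschitz
      have hb : arctan (v / η) - arctan (u / η) ≤ (v - u) / η := by
        calc arctan (v / η) - arctan (u / η) ≤ v / η - u / η :=
              my_arctan_sub_le (by gcongr)
          _ = (v - u) / η := by ring
      refine hb.trans ?_
      rw [div_le_div_iff₀ hη (by positivity)]
      have h6 : (u + η) * (v + η) ≤ 6 * (η * η) := by nlinarith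
      nlinarith [mul_le_mul_of_nonneg_left h6 hs,
        mul_nonneg (mul_nonneg hs hη.le) hη.le]

lemma my_tail {η p : ℝ} (hη : 0 < η) (hp : 0 < p) :
    π / 2 - arctan (p / η) ≤ π * η / (p + η) := by
  rw [my_half_pi_sub hη hp]
  rcases le_or_gt η p with h | h
  · calc arctan (η / p) ≤ η / p := my_arctan_le_self (by positivity)
      _ ≤ π * η / (p + η) := by
        rw [div_le_div_iff₀ hp (by linarith)]
        nlinarith [Real.pi_gt_three, mul_nonneg hη.le hp.le, mul_nonneg hη.le (sub_nonneg.mpr h)]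
  · calc arctan (η / p) ≤ π / 2 := (Real.arctan_lt_pi_div_two _).le
      _ ≤ π * η / (p + η) := by
        rw [le_div_iff₀ (by linarith)]
        nlinarith [Real.pi_pos]

lemma my_in {η p q : ℝ} (hη : 0 < η) (hp : 0 < p) (hq : 0 < q) :
    π - arctan (p / η) - arctan (q / η)
      ≤ π * (η * (p + q) / ((p + η) * (q + η)) + 4 * η / ((p + η) + (q + η))) := by
  have h1 := my_tail hη hp
  have h2 := my_tail hη hq
  have hd1 : 0 < p + η := by linarith
  have hd2 : 0 < q + η := by linarith
  have key : π * η / (p + η) + π * η / (q + η)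
      ≤ π * (η * (p + q) / ((p + η) * (q + η)) + 4 * η / ((p + η) + (q + η))) := by
    have e1 : π * η / (p + η) + π * η / (q + η)
        = π * (η * (p + q) / ((p + η) * (q + η)) + 2 * (η * η) / ((p + η) * (q + η))) := by
      field_simp
      ring
    rw [e1]
    have e2 : 2 * (η * η) / ((p + η) * (q + η)) ≤ 4 * η / ((p + η) + (q + η)) := by
      rw [div_le_div_iff₀ (by positivity) (by positivity)]
      nlinarith [mul_pos hd1 hd2, mul_nonneg hη.le hd1.le, mul_nonneg hη.le hd2.le]
    nlinarith [Real.pi_pos, e2]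
  linarith

lemma my_conv (E η x : ℝ) (hE : 0 < E) (hη : 0 < η) :
    (∫ u : ℝ, (Set.Ioo (-E) E).indicator (fun _ => (1 : ℝ)) (x - u)
        * (η / (Real.pi * (u ^ 2 + η ^ 2))))
      = (arctan ((x + E) / η) - arctan ((x - E) / η)) / π := by
  have hπ := Real.pi_pos
  set g : ℝ → ℝ := fun u => η / (Real.pi * (u ^ 2 + η ^ 2)) with hg
  have hgc : Continuous g := by
    apply continuous_const.div
    · continuity
    · intro u; positivity
  have h1 : (fun u : ℝ => (Set.Ioo (-E) E).indicator (fun _ => (1 : ℝ)) (x - u) * g u)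
      = (Set.Ioo (x - E) (x + E)).indicator g := by
    funext u
    have hmem : (x - u ∈ Set.Ioo (-E) E) ↔ (u ∈ Set.Ioo (x - E) (x + E)) := by
      simp only [Set.mem_Ioo]
      constructor <;> (rintro ⟨a, b⟩; constructor <;> linarith)
    by_cases h : u ∈ Set.Ioo (x - E) (x + E)
    · rw [Set.indicator_of_mem h, Set.indicator_of_mem (hmem.2 h), one_mul]
    · rw [Set.indicator_of_notMem h, Set.indicator_of_notMem (fun hh => h (hmem.1 hh)),
        zero_mul]
  rw [h1, MeasureTheory.integral_indicator measurableSet_Ioo,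
    ← MeasureTheory.integral_Ioc_eq_integral_Ioo,
    ← intervalIntegral.integral_of_le (by linarith : x - E ≤ x + E)]
  have hd : ∀ u : ℝ, HasDerivAt (fun u : ℝ => arctan (u / η) / π) (g u) u := by
    intro u
    have h1 : HasDerivAt (fun u : ℝ => u / η) (1 / η) u := by
      simpa using (hasDerivAt_id u).div_const η
    have h2 := ((Real.hasDerivAt_arctan (u / η)).comp u h1).div_const π
    refine HasDerivAt.congr_deriv h2 ?_
    rw [hg]
    field_simp
    ring
  rw [intervalIntegral.integral_eq_sub_of_hasDerivAt (fun u _ => hd u)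
    (hgc.intervalIntegrable _ _)]
  ring

theorem indicator_smoothing_error : ∃ C : ℝ, 0 < C ∧
    ∀ E η : ℝ, 0 < E → 0 < η → ∀ x : ℝ,
    |(Set.Ioo (-E) E).indicator (fun _ => (1 : ℝ)) x
      - ∫ u : ℝ, (Set.Ioo (-E) E).indicator (fun _ => (1 : ℝ)) (x - u)
          * (η / (Real.pi * (u ^ 2 + η ^ 2)))|
    ≤ C * η * (2 * E / ((|E - x| + η) * (|-E - x| + η))
        + (Set.Ioo (-E) E).indicator (fun _ => (1 : ℝ)) x
            / ((|E - x| + η) + (|-E - x| + η))) := by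
  refine ⟨4, by norm_num, fun E η hE hη x => ?_⟩
  have hπ := Real.pi_pos
  rw [my_conv E η x hE hη]
  rcases le_or_gt E x with hx | hx
  · -- x ≥ E : outside on the right
    have hind : (Set.Ioo (-E) E).indicator (fun _ => (1 : ℝ)) x = 0 :=
      Set.indicator_of_notMem (by simp only [Set.mem_Ioo]; push_neg; intro _; exact hx) _
    rw [hind]
    have ha1 : |E - x| = x - E := by rw [abs_sub_comm]; exact abs_of_nonneg (by linarith)
    have ha2 : |-E - x| = x + E := by
      rw [abs_sub_comm, show x - -E = x + E by ring]; exact abs_of_nonneg (by linarith)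
    rw [ha1, ha2]
    have hmono : arctan ((x - E) / η) ≤ arctan ((x + E) / η) :=
      Real.arctan_strictMono.monotone (by gcongr <;> linarith)
    rw [zero_sub, abs_neg, abs_of_nonneg (div_nonneg (by linarith [hmono]) hπ.le)]
    have hout := my_out hη (by linarith : (0:ℝ) ≤ x - E)
      (by linarith : x - E ≤ x + E)
    rw [div_le_iff₀ hπ]
    have e : x + E - (x - E) = 2 * E := by ring
    rw [e] at hout
    calc arctan ((x + E) / η) - arctan ((x - E) / η)
        ≤ π * (4 * η * (2 * E) / ((x - E + η) * (x + E + η))) := hout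
      _ = 4 * η * (2 * E / ((x - E + η) * (x + E + η)) + 0 / (x - E + η + (x + E + η))) * π := by
          rw [zero_div]; ring
  · rcases le_or_gt x (-E) with hx2 | hx2
    · -- x ≤ -E : outside on the left
      have hind : (Set.Ioo (-E) E).indicator (fun _ => (1 : ℝ)) x = 0 :=
        Set.indicator_of_notMem (by simp only [Set.mem_Ioo]; push_neg; intro h; linarith) _
      rw [hind]
      have ha1 : |E - x| = E - x := abs_of_nonneg (by linarith)
      have ha2 : |-E - x| = -E - x := abs_of_nonneg (by linarith)
      rw [ha1, ha2]
      have e1 : (x + E) / η = -((-E - x) / η) := by ring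
      have e2 : (x - E) / η = -((E - x) / η) := by ring
      rw [e1, e2, Real.arctan_neg, Real.arctan_neg]
      have hmono : arctan ((-E - x) / η) ≤ arctan ((E - x) / η) :=
        Real.arctan_strictMono.monotone (by gcongr <;> linarith)
      have e3 : (0:ℝ) - (-arctan ((-E - x) / η) - -arctan ((E - x) / η)) / π
          = -((arctan ((E - x) / η) - arctan ((-E - x) / η)) / π) := by ring
      rw [e3, abs_neg, abs_of_nonneg (div_nonneg (by linarith [hmono]) hπ.le)]
      have hout := my_out hη (by linarith : (0:ℝ) ≤ -E - x)
        (by linarith : -E - x ≤ E - x)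
      rw [div_le_iff₀ hπ]
      have e : E - x - (-E - x) = 2 * E := by ring
      rw [e] at hout
      calc arctan ((E - x) / η) - arctan ((-E - x) / η)
          ≤ π * (4 * η * (2 * E) / ((-E - x + η) * (E - x + η))) := hout
        _ = 4 * η * (2 * E / ((E - x + η) * (-E - x + η)) + 0 / (E - x + η + (-E - x + η))) * π := by
            rw [zero_div]; ring
    · -- inside
      have hind : (Set.Ioo (-E) E).indicator (fun _ => (1 : ℝ)) x = 1 :=
        Set.indicator_of_mem (Set.mem_Ioo.2 ⟨hx2, hx⟩) _
      rw [hind]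
      have ha1 : |E - x| = E - x := abs_of_nonneg (by linarith)
      have ha2 : |-E - x| = x + E := by
        rw [abs_sub_comm, show x - -E = x + E by ring]; exact abs_of_nonneg (by linarith)
      rw [ha1, ha2]
      have e2 : (x - E) / η = -((E - x) / η) := by ring
      rw [e2, Real.arctan_neg]
      have hnn : 0 ≤ π - arctan ((E - x) / η) - arctan ((x + E) / η) := by
        have h1 := Real.arctan_lt_pi_div_two ((E - x) / η)
        have h2 := Real.arctan_lt_pi_div_two ((x + E) / η)
        linarith
      have habs : |1 - (arctan ((x + E) / η) - -arctan ((E - x) / η)) / π|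
          = (π - arctan ((E - x) / η) - arctan ((x + E) / η)) / π := by
        rw [abs_of_nonneg]
        · field_simp; ring
        · rw [sub_nonneg, div_le_one hπ]; linarith
      rw [habs, div_le_iff₀ hπ]
      have hin := my_in hη (by linarith : (0:ℝ) < E - x) (by linarith : (0:ℝ) < x + E)
      have e : E - x + (x + E) = 2 * E := by ring
      rw [e] at hin
      calc π - arctan ((E - x) / η) - arctan ((x + E) / η)
          ≤ π * (η * (2 * E) / ((E - x + η) * (x + E + η)) + 4 * η / ((E - x + η) + (x + E + η))) := hin
        _ ≤ 4 * η * (2 * E / ((E - x + η) * (x + E + η)) + 1 / (E - x + η + (x + E + η))) * π := by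
            have hdp : (0:ℝ) < E - x + η := by linarith
            have hdq : (0:ℝ) < x + E + η := by linarith
            have t2 : (0:ℝ) ≤ 2 * E / ((E - x + η) * (x + E + η)) :=
              div_nonneg (by linarith) (mul_pos hdp hdq).le
            have key : 4 * η * (2 * E / ((E - x + η) * (x + E + η))
                  + 1 / (E - x + η + (x + E + η))) * π
                - π * (η * (2 * E) / ((E - x + η) * (x + E + η))
                  + 4 * η / ((E - x + η) + (x + E + η)))
                = 3 * (π * η) * (2 * E / ((E - x + η) * (x + E + η))) := by ring
            have h0 : (0:ℝ) ≤ 3 * (π * η) * (2 * E / ((E - x + η) * (x + E + η))) :=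
              mul_nonneg (by positivity) t2
            linarith [key, h0]
end
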